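/- If a category admits an orthogonal factorisation system whose left class consists of epimorphisms and whose right class consists of monomorphisms, then the category is Cauchy complete (idempotent complete): every idempotent splits. -/
import Mathlib


open CategoryTheory

/-- A category with an orthogonal factorisation system whose left class consists of
epimorphisms and whose right class consists of monomorphisms is Cauchy complete
(idempotent complete). -/
theorem isIdempotentComplete_of_epi_mono_factorisation {𝒞 : Type*} [Category 𝒞]
    (L R : MorphismProperty 𝒞)
    (hL_iso : ∀ {X Y : 𝒞} (f : X ⟶ Y), IsIso f → L f)
    (hR_iso : ∀ {X Y : 𝒞} (f : X ⟶ Y), IsIso f → R f)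
    (hL_comp : L.IsStableUnderComposition) (hR_comp : R.IsStableUnderComposition)
    (hL_epi : ∀ {X Y : 𝒞} (f : X ⟶ Y), L f → Epi f)
    (hR_mono : ∀ {X Y : 𝒞} (f : X ⟶ Y), R f → Mono f)
    (hfact : ∀ {X Y : 𝒞} (f : X ⟶ Y),
      ∃ (Z : 𝒞) (l : X ⟶ Z) (r : Z ⟶ Y), L l ∧ R r ∧ l ≫ r = f)
    (horth : ∀ {A B X Y : 𝒞} (l : A ⟶ B) (r : X ⟶ Y), L l → R r →
      HasLiftingProperty l r) :
    IsIdempotentComplete 𝒞 := by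
  constructor
  intro X p hp
  obtain ⟨Z, l, r, hl, hr, hlr⟩ := hfact p
  refine ⟨Z, r, l, ?_, hlr⟩
  have hepi := hL_epi l hl
  have hmono := hR_mono r hr
  have : l ≫ (r ≫ l) ≫ r = l ≫ 𝟙 Z ≫ r := by
    rw [Category.id_comp, hlr, ← Category.assoc, ← Category.assoc, hlr,
      Category.assoc, hlr, hp]
  have := (cancel_epi l).mp this
  exact (cancel_mono r).mp this
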